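/- Let $k$ be a field, $S = k[X_1, X_2, \ldots]$ the polynomial ring in countably many variables, $R$ a subring with a pure inclusion $R \hookrightarrow S$, and $I$ a finitely generated ideal of $R$. Then the set of minimal primes of $I$ in $R$ is finite. -/

import Mathlib

open TensorProduct

universe u v

/-- A ring homomorphism `φ : R →+* S` is *pure* if for every `R`-module `M`
the induced map `M → S ⊗[R] M`, `m ↦ 1 ⊗ m`, is injective. -/
def RingHom.IsPure {R : Type u} {S : Type v} [CommRing R] [CommRing S] (φ : R →+* S) : Prop :=
  ∀ (M : Type (max u v)) [AddCommGroup M] [Module R M],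
    letI := φ.toAlgebra
    Function.Injective (fun m : M => (1 : S) ⊗ₜ[R] m)

/-- Purity implies that every ideal of `R` is contracted from `S`. -/
lemma comap_map_of_isPure {R S : Type} [CommRing R] [CommRing S] (φ : R →+* S)
    (h : φ.IsPure) (P : Ideal R) : (P.map φ).comap φ = P := by
  letI := φ.toAlgebra
  refine le_antisymm ?_ Ideal.le_comap_map
  intro r hr
  rw [Ideal.mem_comap] at hr
  set m₀ : R ⧸ P := Ideal.Quotient.mk P 1 with hm₀
  have hsm : ∀ a : R, a • m₀ = Ideal.Quotient.mk P a := by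
    intro a
    rw [hm₀, Algebra.smul_def, Ideal.Quotient.algebraMap_eq, ← map_mul, mul_one]
  have hsS : ∀ a : R, a • (1 : S) = φ a := by
    intro a
    rw [Algebra.smul_def, RingHom.algebraMap_toAlgebra, mul_one]
  let L : S →ₗ[S] S ⊗[R] (R ⧸ P) := LinearMap.toSpanSingleton S _ ((1 : S) ⊗ₜ[R] m₀)
  have hL : ∀ x : S, L x = x ⊗ₜ[R] m₀ := by
    intro x
    show x • ((1 : S) ⊗ₜ[R] m₀) = x ⊗ₜ[R] m₀
    rw [TensorProduct.smul_tmul', smul_eq_mul, mul_one]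
  have hker : P.map φ ≤ LinearMap.ker L := by
    rw [Ideal.map_le_iff_le_comap]
    intro p hp
    show L (φ p) = 0
    rw [hL, ← hsS p, TensorProduct.smul_tmul, hsm p,
      Ideal.Quotient.eq_zero_iff_mem.mpr hp, TensorProduct.tmul_zero]
  have hzero : (1 : S) ⊗ₜ[R] (Ideal.Quotient.mk P r) = (1 : S) ⊗ₜ[R] (0 : R ⧸ P) := by
    rw [TensorProduct.tmul_zero, ← hsm r, ← TensorProduct.smul_tmul, hsS r, ← hL]
    exact hker hr
  have hmem := h (R ⧸ P) hzero
  rw [← Ideal.Quotient.eq_zero_iff_mem]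
  exact hmem

/-- If every ideal of `R` is contracted along `φ`, finiteness of the set of minimal primes
descends from `S` to `R`. -/
lemma minimalPrimes_finite_of_comap_map {R S : Type*} [CommRing R] [CommRing S] (φ : R →+* S)
    (h : ∀ P : Ideal R, (P.map φ).comap φ = P) (I : Ideal R)
    (hfin : (I.map φ).minimalPrimes.Finite) : I.minimalPrimes.Finite := by
  refine (hfin.image (Ideal.comap φ)).subset ?_
  intro P hP
  have hPp : P.IsPrime := hP.1.1
  have hIP : I ≤ P := hP.1.2
  have hdisj : Disjoint ((P.map φ : Set S)) ((P.primeCompl.map φ : Submonoid S) : Set S) := by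
    rw [Set.disjoint_left]
    rintro x hx ⟨r, hr, rfl⟩
    exact hr ((h P) ▸ Ideal.mem_comap.mpr hx)
  obtain ⟨Q, hQp, hQle, hQdisj⟩ := Ideal.exists_le_prime_disjoint _ _ hdisj
  haveI := hQp
  have hcomap : Q.comap φ = P := by
    apply le_antisymm
    · intro r hrQ
      by_contra hrP
      exact Set.disjoint_left.mp hQdisj hrQ ⟨r, hrP, rfl⟩
    · calc P = (P.map φ).comap φ := (h P).symm
        _ ≤ Q.comap φ := Ideal.comap_mono hQle
  have hIQ : I.map φ ≤ Q := Ideal.map_le_iff_le_comap.mpr (hcomap ▸ hIP)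
  obtain ⟨Q', hQ'min, hQ'le⟩ := Ideal.exists_minimalPrimes_le hIQ
  have h1 : I ≤ Q'.comap φ := Ideal.map_le_iff_le_comap.mp hQ'min.1.2
  have h2 : Q'.comap φ ≤ P := hcomap ▸ Ideal.comap_mono hQ'le
  haveI := hQ'min.1.1
  have hprime : (Q'.comap φ).IsPrime := Ideal.comap_isPrime φ Q'
  exact ⟨Q', hQ'min, le_antisymm h2 (hP.2 ⟨hprime, h1⟩ h2)⟩

/-- In a Noetherian ring, the set of minimal primes over any ideal is finite. -/
lemma minimalPrimes_finite_noeth {B : Type*} [CommRing B] [IsNoetherianRing B] (J : Ideal B) :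
    J.minimalPrimes.Finite := by
  rw [Ideal.minimalPrimes_eq_comap]
  exact (minimalPrimes.finite_of_isNoetherianRing (B ⧸ J)).image _

/-- The set of minimal primes over the extension of an ideal of a Noetherian ring `B` to
`MvPolynomial σ B` is finite. -/
lemma minimalPrimes_map_C_finite {B : Type*} [CommRing B] [IsNoetherianRing B] (σ : Type*)
    (J : Ideal B) :
    (J.map (MvPolynomial.C : B →+* MvPolynomial σ B)).minimalPrimes.Finite := by
  have hker : ∀ p : Ideal B, p.map (MvPolynomial.C : B →+* MvPolynomial σ B) =
      RingHom.ker (MvPolynomial.map (Ideal.Quotient.mk p) :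
        MvPolynomial σ B →+* MvPolynomial σ (B ⧸ p)) := by
    intro p
    rw [MvPolynomial.ker_map, Ideal.mk_ker]
  have hcc : ∀ p : Ideal B,
      (p.map (MvPolynomial.C : B →+* MvPolynomial σ B)).comap MvPolynomial.C = p := by
    intro p
    rw [hker p]
    ext b
    simp [Ideal.mem_comap, RingHom.mem_ker, Ideal.Quotient.eq_zero_iff_mem]
  have hprime : ∀ p : Ideal B, p.IsPrime →
      (p.map (MvPolynomial.C : B →+* MvPolynomial σ B)).IsPrime := by
    intro p hp
    rw [hker p]
    exact RingHom.ker_isPrime _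
  refine ((minimalPrimes_finite_noeth J).image
    (Ideal.map (MvPolynomial.C : B →+* MvPolynomial σ B))).subset ?_
  intro Q hQ
  haveI hQp : Q.IsPrime := hQ.1.1
  set p : Ideal B := Q.comap MvPolynomial.C with hp
  haveI hpp : p.IsPrime := Ideal.comap_isPrime _ Q
  have hJp : J ≤ p := Ideal.map_le_iff_le_comap.mp hQ.1.2
  have hple : p.map (MvPolynomial.C : B →+* MvPolynomial σ B) ≤ Q := Ideal.map_comap_le
  have hQeq : Q = p.map (MvPolynomial.C : B →+* MvPolynomial σ B) :=
    le_antisymm (hQ.2 ⟨hprime p hpp, Ideal.map_mono hJp⟩ hple) hple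
  refine ⟨p, ⟨⟨hpp, hJp⟩, ?_⟩, hQeq.symm⟩
  intro q hq hqp
  have hmapq : q.map (MvPolynomial.C : B →+* MvPolynomial σ B) ≤ Q := by
    rw [hQeq]; exact Ideal.map_mono hqp
  have : Q ≤ q.map (MvPolynomial.C : B →+* MvPolynomial σ B) :=
    hQ.2 ⟨hprime q hq.1, Ideal.map_mono hq.2⟩ hmapq
  calc p = (p.map (MvPolynomial.C : B →+* MvPolynomial σ B)).comap MvPolynomial.C :=
        (hcc p).symm
    _ ≤ (q.map (MvPolynomial.C : B →+* MvPolynomial σ B)).comap MvPolynomial.C := by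
        rw [← hQeq]; exact Ideal.comap_mono this
    _ = q := hcc q

/-- In a polynomial ring (in arbitrarily many variables) over a Noetherian ring, every
finitely generated ideal has finitely many minimal primes. -/
lemma mvPolynomial_minimalPrimes_finite {B : Type*} [CommRing B] [IsNoetherianRing B]
    {σ : Type*} (J : Ideal (MvPolynomial σ B)) (hJ : J.FG) : J.minimalPrimes.Finite := by
  classical
  obtain ⟨s, rfl⟩ := hJ
  set tset : Set σ := ↑(s.biUnion fun f => f.vars) with htset
  let A := MvPolynomial tset B
  let e : σ ≃ (↥tsetᶜ ⊕ ↥tset) := (Equiv.Set.sumCompl tset).symm.trans (Equiv.sumComm _ _)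
  let E : MvPolynomial σ B ≃ₐ[B] MvPolynomial ↥tsetᶜ A :=
    (MvPolynomial.renameEquiv B e).trans (MvPolynomial.sumAlgEquiv B _ _)
  have hcomp : (E : MvPolynomial σ B →ₐ[B] MvPolynomial ↥tsetᶜ A).comp
      (MvPolynomial.rename (Subtype.val : tset → σ)) =
      IsScalarTower.toAlgHom B A (MvPolynomial ↥tsetᶜ A) := by
    rw [← MvPolynomial.sumAlgEquiv_comp_rename_inr (R := B) (S₁ := ↥tsetᶜ) (S₂ := ↥tset)]
    apply MvPolynomial.algHom_ext
    intro i
    have he : e ↑i = Sum.inr i := by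
      simp only [e, Equiv.trans_apply, Equiv.sumComm_apply]
      rw [Equiv.Set.sumCompl_symm_apply_of_mem i.2]
      rfl
    have hXr : (MvPolynomial.sumAlgEquiv B ↥tsetᶜ ↥tset) (MvPolynomial.X (Sum.inr i)) =
        MvPolynomial.C (MvPolynomial.X i) := by
      have := congrArg (fun ψ => ψ (MvPolynomial.X i))
        (MvPolynomial.sumAlgEquiv_comp_rename_inr (R := B) (S₁ := ↥tsetᶜ) (S₂ := ↥tset))
      simpa using this
    simp [E, he, hXr]
  have hrange : (E : MvPolynomial σ B → MvPolynomial ↥tsetᶜ A) '' ↑s ⊆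
      Set.range (MvPolynomial.C : A →+* MvPolynomial ↥tsetᶜ A) := by
    rintro _ ⟨f, hf, rfl⟩
    have hsupp : f ∈ MvPolynomial.supported B tset := by
      rw [MvPolynomial.mem_supported]
      intro x hx
      rw [htset]
      exact_mod_cast Finset.mem_biUnion.mpr ⟨f, hf, hx⟩
    rw [MvPolynomial.supported_eq_range_rename] at hsupp
    obtain ⟨g, rfl⟩ := hsupp
    refine ⟨g, ?_⟩
    have := congrArg (fun ψ => ψ g) hcomp
    exact this.symm
  set T : Set (MvPolynomial ↥tsetᶜ A) := (E : MvPolynomial σ B → _) '' ↑s with hT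
  have hTC : (MvPolynomial.C : A →+* MvPolynomial ↥tsetᶜ A) ''
      ((MvPolynomial.C : A →+* MvPolynomial ↥tsetᶜ A) ⁻¹' T) = T :=
    Set.image_preimage_eq_of_subset hrange
  have hmapeq : (Ideal.span ↑s).map (E : MvPolynomial σ B →+* MvPolynomial ↥tsetᶜ A) =
      (Ideal.span ((MvPolynomial.C : A →+* MvPolynomial ↥tsetᶜ A) ⁻¹' T)).map
        (MvPolynomial.C : A →+* MvPolynomial ↥tsetᶜ A) := by
    rw [Ideal.map_span, Ideal.map_span, hTC, hT]
    rfl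
  refine minimalPrimes_finite_of_comap_map
    (E : MvPolynomial σ B →+* MvPolynomial ↥tsetᶜ A)
    (fun P => Ideal.comap_map_of_bijective _ E.bijective) _ ?_
  rw [hmapeq]
  exact minimalPrimes_map_C_finite _ _

/-- Let `k` be a field, `S = k[X₁, X₂, …]`, `R` a subring of `S` whose
inclusion is pure, and `I` a finitely generated ideal of `R`.  Then the set of minimal
primes of `I` in `R` is finite. -/
theorem minimalPrimes_finite_of_pure_subring_of_fg {k : Type} [Field k]
    (R : Subring (MvPolynomial ℕ k)) (hpure : R.subtype.IsPure)
    (I : Ideal R) (hI : I.FG) :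
    I.minimalPrimes.Finite := by
  exact minimalPrimes_finite_of_comap_map R.subtype
    (fun P => comap_map_of_isPure R.subtype hpure P) I
    (mvPolynomial_minimalPrimes_finite _ (hI.map _))
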